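/- Let V, Ṽ ∈ ℝ^{d×t} have orthonormal columns, and let x, y ∈ ℝ^d with ‖x‖₂ = ‖y‖₂ = 1. Define d₁ = ‖V^T(x−y)‖₂, d₂ = ‖Ṽ^T(x−y)‖₂, c = ‖V^T Ṽ‖₂, s = ‖(I − V V^T) Ṽ‖₂, and assume c ≠ 0. Then (d₂ − 2s)/c ≤ d₁ ≤ d₂·c + 2s. -/

import Mathlib

open Matrix
open scoped Matrix.Norms.L2Operator

/-- The Euclidean (2-)norm of a vector indexed by `Fin m`. -/
noncomputable def vecEnorm {m : ℕ} (v : Fin m → ℝ) : ℝ :=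
  ‖(WithLp.equiv 2 (Fin m → ℝ)).symm v‖

namespace DistAux

lemma conjT_eq_transpose {m n : ℕ} (A : Matrix (Fin m) (Fin n) ℝ) : Aᴴ = Aᵀ := by
  ext i j; simp [Matrix.conjTranspose_apply]

lemma norm_transpose {m n : ℕ} (A : Matrix (Fin m) (Fin n) ℝ) : ‖Aᵀ‖ = ‖A‖ := by
  rw [← conjT_eq_transpose]; exact Matrix.l2_opNorm_conjTranspose A

lemma enorm_mulVec_le {m n : ℕ} (A : Matrix (Fin m) (Fin n) ℝ) (v : Fin n → ℝ) :
    vecEnorm (A.mulVec v) ≤ ‖A‖ * vecEnorm v :=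
  Matrix.l2_opNorm_mulVec A ((WithLp.equiv 2 (Fin n → ℝ)).symm v)

lemma enorm_add_le {m : ℕ} (u v : Fin m → ℝ) : vecEnorm (u + v) ≤ vecEnorm u + vecEnorm v := by
  simpa [vecEnorm, WithLp.toLp_add] using
    norm_add_le ((WithLp.equiv 2 (Fin m → ℝ)).symm u) ((WithLp.equiv 2 (Fin m → ℝ)).symm v)

lemma enorm_sub_le {m : ℕ} (u v : Fin m → ℝ) : vecEnorm (u - v) ≤ vecEnorm u + vecEnorm v := by
  simpa [vecEnorm, WithLp.toLp_sub] using
    norm_sub_le ((WithLp.equiv 2 (Fin m → ℝ)).symm u) ((WithLp.equiv 2 (Fin m → ℝ)).symm v)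

lemma enorm_nonneg {m : ℕ} (v : Fin m → ℝ) : 0 ≤ vecEnorm v := norm_nonneg _

lemma enorm_sq {m : ℕ} (v : Fin m → ℝ) : vecEnorm v ^ 2 = ∑ i, v i ^ 2 := by
  rw [vecEnorm, EuclideanSpace.norm_eq, Real.sq_sqrt (by positivity)]
  simp [Real.norm_eq_abs, sq_abs]

lemma trace_transpose_mul {m n : ℕ} (A : Matrix (Fin m) (Fin n) ℝ) :
    (Aᵀ * A).trace = ∑ j, ∑ i, A i j ^ 2 := by
  simp [Matrix.trace, Matrix.diag, Matrix.mul_apply, sq]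

/-- Spectral norm squared is at most the Frobenius norm squared (trace of `AᵀA`). -/
lemma sq_norm_le_trace {m n : ℕ} (A : Matrix (Fin m) (Fin n) ℝ) :
    ‖A‖ ^ 2 ≤ (Aᵀ * A).trace := by
  rw [trace_transpose_mul]
  set F : ℝ := ∑ j, ∑ i, A i j ^ 2 with hF
  have hF0 : 0 ≤ F := by positivity
  have hnorm : ‖A‖ ≤ Real.sqrt F := by
    rw [Matrix.l2_opNorm_def]
    apply ContinuousLinearMap.opNorm_le_bound _ (Real.sqrt_nonneg F)
    intro x
    have happ : (((Matrix.toEuclideanLin (𝕜 := ℝ) (m := Fin m) (n := Fin n)).trans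
        LinearMap.toContinuousLinearMap) A) x
        = (WithLp.equiv 2 (Fin m → ℝ)).symm (A.mulVec ((WithLp.equiv 2 (Fin n → ℝ)) x)) := rfl
    rw [happ]
    have hx : ‖x‖ = Real.sqrt (∑ j, (x j) ^ 2) := by
      rw [EuclideanSpace.norm_eq]; simp [Real.norm_eq_abs, sq_abs]
    have hAx : ‖(WithLp.equiv 2 (Fin m → ℝ)).symm (A.mulVec ((WithLp.equiv 2 (Fin n → ℝ)) x))‖
        = Real.sqrt (∑ i, (A.mulVec x i) ^ 2) := by
      rw [EuclideanSpace.norm_eq]; simp [Real.norm_eq_abs, sq_abs]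
    rw [hAx, hx, ← Real.sqrt_mul hF0]
    apply Real.sqrt_le_sqrt
    have key : ∀ i, (A.mulVec x i) ^ 2 ≤ (∑ j, A i j ^ 2) * ∑ j, (x j) ^ 2 := by
      intro i
      simpa [Matrix.mulVec, dotProduct] using
        Finset.sum_mul_sq_le_sq_mul_sq Finset.univ (fun j => A i j) (fun j => x j)
    calc ∑ i, (A.mulVec x i) ^ 2 ≤ ∑ i, (∑ j, A i j ^ 2) * ∑ j, (x j) ^ 2 :=
          Finset.sum_le_sum fun i _ => key i
      _ = (∑ i, ∑ j, A i j ^ 2) * ∑ j, (x j) ^ 2 := by rw [Finset.sum_mul]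
      _ = F * ∑ j, (x j) ^ 2 := by rw [hF, Finset.sum_comm]
  calc ‖A‖ ^ 2 ≤ Real.sqrt F ^ 2 := by
        apply pow_le_pow_left₀ (norm_nonneg _) hnorm
    _ = F := Real.sq_sqrt hF0

/-- Frobenius norm squared is at most `n` times the spectral norm squared. -/
lemma trace_le_card_mul_sq_norm {m n : ℕ} (A : Matrix (Fin m) (Fin n) ℝ) :
    (Aᵀ * A).trace ≤ (n : ℝ) * ‖A‖ ^ 2 := by
  rw [trace_transpose_mul]
  have hcol : ∀ j, ∑ i, A i j ^ 2 ≤ ‖A‖ ^ 2 := by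
    intro j
    have h1 : A.mulVec (Pi.single j 1) = fun i => A i j := by
      funext i; simp [Matrix.mulVec_single]
    have h2 : vecEnorm (A.mulVec (Pi.single j 1)) ≤ ‖A‖ * vecEnorm (Pi.single j (1 : ℝ)) :=
      enorm_mulVec_le A _
    have h3 : vecEnorm (Pi.single j (1 : ℝ)) = 1 := by
      have : vecEnorm (Pi.single j (1 : ℝ)) = ‖EuclideanSpace.single j (1 : ℝ)‖ := rfl
      rw [this, EuclideanSpace.norm_single]; simp
    rw [h3, mul_one] at h2
    have h4 : ∑ i, A i j ^ 2 = vecEnorm (A.mulVec (Pi.single j 1)) ^ 2 := by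
      rw [enorm_sq, h1]
    rw [h4]
    exact pow_le_pow_left₀ (enorm_nonneg _) h2 2
  calc ∑ j, ∑ i, A i j ^ 2 ≤ ∑ _j : Fin n, ‖A‖ ^ 2 := Finset.sum_le_sum fun j _ => hcol j
    _ = (n : ℝ) * ‖A‖ ^ 2 := by simp [mul_comm]

lemma trace_pow_eq {n : ℕ} (M : Matrix (Fin n) (Fin n) ℝ) (k : ℕ) :
    ((1 - M * Mᵀ) ^ k).trace = ((1 - Mᵀ * M) ^ k).trace := by
  have comm : ∀ j : ℕ, M * (1 - Mᵀ * M) ^ j = (1 - M * Mᵀ) ^ j * M := by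
    intro j
    induction j with
    | zero => simp
    | succ j ih =>
      rw [pow_succ, pow_succ, ← mul_assoc, ih, mul_assoc, mul_assoc]
      congr 1
      rw [mul_sub, mul_one, sub_mul, one_mul, mul_assoc]
  induction k with
  | zero => rfl
  | succ k ih =>
    have e1 : (1 - M * Mᵀ) ^ (k + 1)
        = (1 - M * Mᵀ) ^ k - ((1 - M * Mᵀ) ^ k * M) * Mᵀ := by
      rw [pow_succ, mul_sub, mul_one, mul_assoc]
    have e2 : (1 - Mᵀ * M) ^ (k + 1)
        = (1 - Mᵀ * M) ^ k - ((1 - Mᵀ * M) ^ k * Mᵀ) * M := by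
      rw [pow_succ, mul_sub, mul_one, mul_assoc]
    rw [e1, e2, Matrix.trace_sub, Matrix.trace_sub, ih]
    congr 1
    rw [← comm k, Matrix.trace_mul_comm (M * (1 - Mᵀ * M) ^ k) Mᵀ, ← mul_assoc,
      Matrix.trace_mul_comm (Mᵀ * M), mul_assoc]

lemma transpose_pow_symm {n : ℕ} {X : Matrix (Fin n) (Fin n) ℝ} (hX : Xᵀ = X) (k : ℕ) :
    (X ^ k)ᵀ = X ^ k := by
  rw [Matrix.transpose_pow, hX]

/-- If `a^(2^(j+1)) ≤ C * b^(2^(j+1))` for all `j`, with everything nonneg, then `a ≤ b`. -/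
lemma le_of_forall_pow_le {a b C : ℝ} (ha : 0 ≤ a) (hb : 0 ≤ b) (hC : 0 ≤ C)
    (h : ∀ j : ℕ, a ^ 2 ^ (j + 1) ≤ C * b ^ 2 ^ (j + 1)) : a ≤ b := by
  by_contra hab
  push_neg at hab
  rcases hb.eq_or_lt with hb0 | hb0
  · have h0 := h 0
    rw [← hb0] at h0
    simp only [pow_succ, pow_zero, one_mul] at h0
    have : (0:ℝ) < a := lt_of_le_of_lt hb hab
    nlinarith
  · have hr : 1 < a / b := (one_lt_div hb0).2 hab
    obtain ⟨N, hN⟩ := pow_unbounded_of_one_lt C hr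
    have h1 : (a / b) ^ 2 ^ (N + 1) ≤ C := by
      rw [div_pow, div_le_iff₀ (by positivity)]
      exact h N
    have h2 : (a / b) ^ N ≤ (a / b) ^ 2 ^ (N + 1) := by
      apply pow_le_pow_right₀ hr.le
      calc N ≤ 2 ^ N := (Nat.lt_two_pow_self (n := N)).le
        _ ≤ 2 ^ (N + 1) := Nat.pow_le_pow_right (by norm_num) (Nat.le_succ N)
    linarith

/-- Key: `‖1 - M Mᵀ‖ ≤ ‖1 - Mᵀ M‖` for square real `M`. -/
lemma norm_one_sub_mul_comm {n : ℕ} (M : Matrix (Fin n) (Fin n) ℝ) :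
    ‖1 - M * Mᵀ‖ ≤ ‖1 - Mᵀ * M‖ := by
  set X : Matrix (Fin n) (Fin n) ℝ := 1 - M * Mᵀ with hXdef
  set Y : Matrix (Fin n) (Fin n) ℝ := 1 - Mᵀ * M with hYdef
  have hXT : Xᵀ = X := by
    rw [hXdef, Matrix.transpose_sub, Matrix.transpose_one, Matrix.transpose_mul,
      Matrix.transpose_transpose]
  have hYT : Yᵀ = Y := by
    rw [hYdef, Matrix.transpose_sub, Matrix.transpose_one, Matrix.transpose_mul,
      Matrix.transpose_transpose]
  have hXsa : IsSelfAdjoint X := by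
    show Xᴴ = X
    rw [conjT_eq_transpose, hXT]
  have hYsa : IsSelfAdjoint Y := by
    show Yᴴ = Y
    rw [conjT_eq_transpose, hYT]
  apply le_of_forall_pow_le (norm_nonneg X) (norm_nonneg Y) (Nat.cast_nonneg n)
  intro j
  have hXpow : ‖X ^ 2 ^ (j + 1)‖ = ‖X‖ ^ 2 ^ (j + 1) := by
    have h := congrArg (fun r : NNReal => (r : ℝ)) (hXsa.nnnorm_pow_two_pow (j + 1))
    simpa using h
  have hYpow : ‖Y ^ 2 ^ j‖ = ‖Y‖ ^ 2 ^ j := by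
    have h := congrArg (fun r : NNReal => (r : ℝ)) (hYsa.nnnorm_pow_two_pow j)
    simpa using h
  have hsplitX : X ^ 2 ^ (j + 1) = (X ^ 2 ^ j)ᵀ * X ^ 2 ^ j := by
    rw [transpose_pow_symm hXT, ← pow_add, pow_succ, mul_two]
  have hsplitY : Y ^ 2 ^ (j + 1) = (Y ^ 2 ^ j)ᵀ * Y ^ 2 ^ j := by
    rw [transpose_pow_symm hYT, ← pow_add, pow_succ, mul_two]
  have hbound : ‖X ^ 2 ^ (j + 1)‖ ≤ (X ^ 2 ^ (j + 1)).trace := by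
    rw [hsplitX]
    have e : ‖(X ^ 2 ^ j)ᵀ * X ^ 2 ^ j‖ = ‖X ^ 2 ^ j‖ ^ 2 := by
      rw [← conjT_eq_transpose, Matrix.l2_opNorm_conjTranspose_mul_self, sq]
    rw [e]
    exact sq_norm_le_trace _
  calc ‖X‖ ^ 2 ^ (j + 1) = ‖X ^ 2 ^ (j + 1)‖ := hXpow.symm
    _ ≤ (X ^ 2 ^ (j + 1)).trace := hbound
    _ = (Y ^ 2 ^ (j + 1)).trace := trace_pow_eq M (2 ^ (j + 1))
    _ = ((Y ^ 2 ^ j)ᵀ * Y ^ 2 ^ j).trace := by rw [← hsplitY]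
    _ ≤ (n : ℝ) * ‖Y ^ 2 ^ j‖ ^ 2 := trace_le_card_mul_sq_norm _
    _ = (n : ℝ) * ‖Y‖ ^ 2 ^ (j + 1) := by
        rw [hYpow, ← pow_mul, ← pow_succ]

/-- `‖(1 - W Wᵀ) V‖ ≤ ‖(1 - V Vᵀ) W‖` for matrices with orthonormal columns. -/
lemma proj_norm_le {d t : ℕ} (V W : Matrix (Fin d) (Fin t) ℝ)
    (hV : Vᵀ * V = 1) (hW : Wᵀ * W = 1) :
    ‖(1 - W * Wᵀ) * V‖ ≤ ‖(1 - V * Vᵀ) * W‖ := by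
  have hQ : (1 - W * Wᵀ) * (1 - W * Wᵀ) = 1 - W * Wᵀ := by
    rw [sub_mul, one_mul, mul_sub, mul_one, Matrix.mul_assoc W Wᵀ, ← Matrix.mul_assoc Wᵀ W, hW,
      Matrix.one_mul]
    abel
  have hP : (1 - V * Vᵀ) * (1 - V * Vᵀ) = 1 - V * Vᵀ := by
    rw [sub_mul, one_mul, mul_sub, mul_one, Matrix.mul_assoc V Vᵀ, ← Matrix.mul_assoc Vᵀ V, hV,
      Matrix.one_mul]
    abel
  have key1 : ((1 - W * Wᵀ) * V)ᴴ * ((1 - W * Wᵀ) * V) = 1 - (Vᵀ * W) * (Vᵀ * W)ᵀ := by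
    rw [Matrix.transpose_mul, Matrix.transpose_transpose, conjT_eq_transpose,
      Matrix.transpose_mul, Matrix.transpose_sub, Matrix.transpose_one, Matrix.transpose_mul,
      Matrix.transpose_transpose, Matrix.mul_assoc Vᵀ, ← Matrix.mul_assoc (1 - W * Wᵀ), hQ,
      Matrix.sub_mul, Matrix.one_mul, Matrix.mul_sub, hV, Matrix.mul_assoc W Wᵀ V,
      ← Matrix.mul_assoc Vᵀ W]
  have key2 : ((1 - V * Vᵀ) * W)ᴴ * ((1 - V * Vᵀ) * W) = 1 - (Vᵀ * W)ᵀ * (Vᵀ * W) := by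
    rw [Matrix.transpose_mul, Matrix.transpose_transpose, conjT_eq_transpose,
      Matrix.transpose_mul, Matrix.transpose_sub, Matrix.transpose_one, Matrix.transpose_mul,
      Matrix.transpose_transpose, Matrix.mul_assoc Wᵀ, ← Matrix.mul_assoc (1 - V * Vᵀ), hP,
      Matrix.sub_mul, Matrix.one_mul, Matrix.mul_sub, hW, Matrix.mul_assoc V Vᵀ W,
      ← Matrix.mul_assoc Wᵀ V]
  have h1 : ‖(1 - W * Wᵀ) * V‖ * ‖(1 - W * Wᵀ) * V‖ = ‖1 - (Vᵀ * W) * (Vᵀ * W)ᵀ‖ := by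
    rw [← Matrix.l2_opNorm_conjTranspose_mul_self, key1]
  have h2 : ‖(1 - V * Vᵀ) * W‖ * ‖(1 - V * Vᵀ) * W‖ = ‖1 - (Vᵀ * W)ᵀ * (Vᵀ * W)‖ := by
    rw [← Matrix.l2_opNorm_conjTranspose_mul_self, key2]
  have hkey := norm_one_sub_mul_comm (Vᵀ * W)
  nlinarith [norm_nonneg ((1 - W * Wᵀ) * V), norm_nonneg ((1 - V * Vᵀ) * W)]

end DistAux

open DistAux in
/-- For orthonormal `V, Ṽ`, unit vectors `x, y`, `c = ‖VᵀṼ‖ ≠ 0` and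
`s = ‖(I−VVᵀ)Ṽ‖`: `(d₂ − 2s)/c ≤ d₁ ≤ d₂·c + 2s`. -/
theorem distance_two_sided_bound {d t : ℕ} (V W : Matrix (Fin d) (Fin t) ℝ)
    (hV : Vᵀ * V = 1) (hW : Wᵀ * W = 1)
    (x y : Fin d → ℝ) (hx : vecEnorm x = 1) (hy : vecEnorm y = 1)
    (hc : ‖Vᵀ * W‖ ≠ 0) :
    (vecEnorm (Wᵀ.mulVec (x - y)) - 2 * ‖(1 - V * Vᵀ) * W‖) / ‖Vᵀ * W‖
        ≤ vecEnorm (Vᵀ.mulVec (x - y)) ∧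
      vecEnorm (Vᵀ.mulVec (x - y))
        ≤ vecEnorm (Wᵀ.mulVec (x - y)) * ‖Vᵀ * W‖ + 2 * ‖(1 - V * Vᵀ) * W‖ := by
  set z : Fin d → ℝ := x - y with hz
  set c : ℝ := ‖Vᵀ * W‖ with hcdef
  set s : ℝ := ‖(1 - V * Vᵀ) * W‖ with hsdef
  have hcpos : 0 < c := lt_of_le_of_ne (norm_nonneg _) (Ne.symm hc)
  have hs0 : 0 ≤ s := norm_nonneg _
  have hz2 : vecEnorm z ≤ 2 := by
    calc vecEnorm z ≤ vecEnorm x + vecEnorm y := enorm_sub_le x y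
      _ = 2 := by rw [hx, hy]; norm_num
  set d1 : ℝ := vecEnorm (Vᵀ.mulVec z) with hd1
  set d2 : ℝ := vecEnorm (Wᵀ.mulVec z) with hd2
  -- norms of transposed products
  have hWV : ‖Wᵀ * V‖ = c := by
    rw [hcdef, ← DistAux.norm_transpose (Vᵀ * W), Matrix.transpose_mul, Matrix.transpose_transpose]
  have hVW : ‖Vᵀ * W‖ = c := rfl
  have hWP : ‖Wᵀ * (1 - V * Vᵀ)‖ = s := by
    rw [hsdef, ← DistAux.norm_transpose ((1 - V * Vᵀ) * W), Matrix.transpose_mul, Matrix.transpose_sub,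
      Matrix.transpose_one, Matrix.transpose_mul, Matrix.transpose_transpose]
  have hVQ : ‖Vᵀ * (1 - W * Wᵀ)‖ ≤ s := by
    have : ‖Vᵀ * (1 - W * Wᵀ)‖ = ‖(1 - W * Wᵀ) * V‖ := by
      rw [← DistAux.norm_transpose ((1 - W * Wᵀ) * V), Matrix.transpose_mul, Matrix.transpose_sub,
        Matrix.transpose_one, Matrix.transpose_mul, Matrix.transpose_transpose]
    rw [this]
    exact proj_norm_le V W hV hW
  -- first inequality : d2 ≤ c * d1 + 2 * s
  have hsumW : (Wᵀ * V) * Vᵀ + Wᵀ * (1 - V * Vᵀ) = Wᵀ := by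
    rw [Matrix.mul_sub, Matrix.mul_one, Matrix.mul_assoc]
    abel
  have decompW : Wᵀ.mulVec z = (Wᵀ * V).mulVec (Vᵀ.mulVec z)
      + (Wᵀ * (1 - V * Vᵀ)).mulVec z := by
    rw [Matrix.mulVec_mulVec, ← Matrix.add_mulVec, hsumW]
  have ineq1 : d2 ≤ c * d1 + s * 2 := by
    rw [hd2, decompW]
    have step1 := DistAux.enorm_add_le ((Wᵀ * V).mulVec (Vᵀ.mulVec z)) ((Wᵀ * (1 - V * Vᵀ)).mulVec z)
    have step2 := enorm_mulVec_le (Wᵀ * V) (Vᵀ.mulVec z)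
    have step3 := enorm_mulVec_le (Wᵀ * (1 - V * Vᵀ)) z
    rw [hWV] at step2
    rw [hWP] at step3
    have step4 : ‖Wᵀ * (1 - V * Vᵀ)‖ * vecEnorm z ≤ s * 2 := by
      rw [hWP]; exact mul_le_mul_of_nonneg_left hz2 hs0
    rw [hWP] at step4
    have h0 := enorm_nonneg (Vᵀ.mulVec z)
    rw [← hd1] at step2
    linarith
  -- second inequality : d1 ≤ d2 * c + 2 * s
  have hsumV : (Vᵀ * W) * Wᵀ + Vᵀ * (1 - W * Wᵀ) = Vᵀ := by
    rw [Matrix.mul_sub, Matrix.mul_one, Matrix.mul_assoc]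
    abel
  have decompV : Vᵀ.mulVec z = (Vᵀ * W).mulVec (Wᵀ.mulVec z)
      + (Vᵀ * (1 - W * Wᵀ)).mulVec z := by
    rw [Matrix.mulVec_mulVec, ← Matrix.add_mulVec, hsumV]
  have ineq2 : d1 ≤ d2 * c + 2 * s := by
    rw [hd1, decompV]
    have step1 := DistAux.enorm_add_le ((Vᵀ * W).mulVec (Wᵀ.mulVec z)) ((Vᵀ * (1 - W * Wᵀ)).mulVec z)
    have step2 := enorm_mulVec_le (Vᵀ * W) (Wᵀ.mulVec z)
    have step3 := enorm_mulVec_le (Vᵀ * (1 - W * Wᵀ)) z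
    have step4 : ‖Vᵀ * (1 - W * Wᵀ)‖ * vecEnorm z ≤ s * 2 := by
      have hq0 : (0:ℝ) ≤ vecEnorm z := enorm_nonneg z
      nlinarith [norm_nonneg (Vᵀ * (1 - W * Wᵀ))]
    have h0 := enorm_nonneg (Wᵀ.mulVec z)
    rw [← hd2] at step2
    rw [hVW] at step2
    linarith
  constructor
  · rw [div_le_iff₀ hcpos]
    nlinarith [enorm_nonneg (Vᵀ.mulVec z)]
  · exact ineq2
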